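/- arXiv:2408.02289 — 2 statements merged into one kernel-verified Lean document; each statement's English description precedes it below -/
import Mathlib

section
/- Let N ≥ 2, τ_l > 0, x_1 ≥ 0 and x_l ≥ 0 for l = 3, …, N, and K ∈ ℝ. Let x_2^− ≤ x̃_2 ≤ x_2^+ be reals with 1 + τ_2 x_2^− > 0, and set h̃_2 = x_2^+ − x_2^− > 0. Then the cell average of the payoff satisfies (1/h̃_2) ∫_{x_2^−}^{x_2^+} max{ g(x_1, x_2, x_3, …, x_N), 0 } dx_2 = (1/(h̃_2 (1+τ_1 x_1))) ( x_2^+ − x̃_2 − (K + (1 − H_3)/τ_2) · log( (1+τ_2 x_2^+)/(1+τ_2 x̃_2) ) ). -/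
/-- closed-form cell average of the swaption payoff `max{g, 0}`
over the cell `[x_2^-, x_2^+]` in the `x_2`-direction. -/
theorem payoff_cell_average
    (N : ℕ) (hN : 2 ≤ N) (τ x : ℕ → ℝ) (K : ℝ)
    (hτ : ∀ l, 1 ≤ l → l ≤ N → 0 < τ l)
    (hx1 : 0 ≤ x 1)
    (hx : ∀ l, 3 ≤ l → l ≤ N → 0 ≤ x l)
    (H3 x2tilde x2m x2p h2 : ℝ)
    (hH3 : H3 = ∑ k ∈ Finset.Icc 3 N,
        (∏ l ∈ Finset.Icc 3 k, (1 + τ l * x l)⁻¹) * (τ k * (x k - K)))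
    (hx2tilde : x2tilde = K - H3 / τ 2)
    (hm : x2m ≤ x2tilde) (hp : x2tilde ≤ x2p)
    (hposm : 0 < 1 + τ 2 * x2m)
    (hh2 : h2 = x2p - x2m) (hh2pos : 0 < h2) :
    (1 / h2) * ∫ y in x2m..x2p,
        max (∑ k ∈ Finset.Icc 2 N,
          (∏ l ∈ Finset.Icc 1 k, (1 + τ l * (if l = 2 then y else x l))⁻¹) *
            (τ k * ((if k = 2 then y else x k) - K))) 0 =
      (1 / (h2 * (1 + τ 1 * x 1))) *
        (x2p - x2tilde -
          (K + (1 - H3) / τ 2) * Real.log ((1 + τ 2 * x2p) / (1 + τ 2 * x2tilde))) := by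
  have hτ1 : 0 < τ 1 := hτ 1 le_rfl (by omega)
  have hτ2 : 0 < τ 2 := hτ 2 (by omega) hN
  have hc1 : 0 < 1 + τ 1 * x 1 := by nlinarith
  set c1 : ℝ := (1 + τ 1 * x 1)⁻¹ with hc1def
  have hc1pos : 0 < c1 := inv_pos.2 hc1
  -- positivity of 1 + τ 2 * y on [x2m, x2p]
  have hposy : ∀ y : ℝ, x2m ≤ y → 0 < 1 + τ 2 * y := by
    intro y hy; nlinarith
  -- Step 1: the sum simplifies
  have hsum : ∀ y : ℝ,
      (∑ k ∈ Finset.Icc 2 N,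
        (∏ l ∈ Finset.Icc 1 k, (1 + τ l * (if l = 2 then y else x l))⁻¹) *
          (τ k * ((if k = 2 then y else x k) - K)))
      = c1 * ((1 + τ 2 * y)⁻¹ * (τ 2 * (y - x2tilde))) := by
    intro y
    set f : ℕ → ℝ := fun l => (1 + τ l * (if l = 2 then y else x l))⁻¹ with hf
    have hf1 : f 1 = c1 := by simp [hf, hc1def]
    have hf2 : f 2 = (1 + τ 2 * y)⁻¹ := by simp [hf]
    have hins : Finset.Icc 2 N = insert 2 (Finset.Icc 3 N) := by
      ext m; simp only [Finset.mem_Icc, Finset.mem_insert]; omega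
    have hnotmem : (2 : ℕ) ∉ Finset.Icc 3 N := by simp
    rw [hins, Finset.sum_insert hnotmem]
    have h12 : Finset.Icc 1 2 = ({1, 2} : Finset ℕ) := by decide
    have hprod2 : (∏ l ∈ Finset.Icc 1 2, f l) = c1 * (1 + τ 2 * y)⁻¹ := by
      rw [h12, Finset.prod_insert (by decide), Finset.prod_singleton, hf1, hf2]
    have hprodk : ∀ k ∈ Finset.Icc 3 N,
        (∏ l ∈ Finset.Icc 1 k, f l)
          = c1 * (1 + τ 2 * y)⁻¹ * ∏ l ∈ Finset.Icc 3 k, (1 + τ l * x l)⁻¹ := by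
      intro k hk
      have hk3 : 3 ≤ k := (Finset.mem_Icc.mp hk).1
      have hins2 : Finset.Icc 1 k = insert 1 (insert 2 (Finset.Icc 3 k)) := by
        ext m; simp only [Finset.mem_Icc, Finset.mem_insert]; omega
      rw [hins2, Finset.prod_insert (by simp), Finset.prod_insert (by simp), hf1, hf2]
      rw [mul_assoc]
      congr 1
      congr 1
      apply Finset.prod_congr rfl
      intro l hl
      have hl3 : 3 ≤ l := (Finset.mem_Icc.mp hl).1
      simp only [hf, if_neg (show l ≠ 2 by omega)]
    have key : τ 2 * (y - x2tilde) = τ 2 * (y - K) + H3 := by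
      rw [hx2tilde]; field_simp; ring
    calc (∏ l ∈ Finset.Icc 1 2, f l) * (τ 2 * ((if (2:ℕ) = 2 then y else x 2) - K))
          + ∑ k ∈ Finset.Icc 3 N,
            (∏ l ∈ Finset.Icc 1 k, f l) * (τ k * ((if k = 2 then y else x k) - K))
        = c1 * (1 + τ 2 * y)⁻¹ * (τ 2 * (y - K))
          + ∑ k ∈ Finset.Icc 3 N, c1 * (1 + τ 2 * y)⁻¹ *
            ((∏ l ∈ Finset.Icc 3 k, (1 + τ l * x l)⁻¹) * (τ k * (x k - K))) := by
          rw [hprod2]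
          simp only [if_pos rfl]
          congr 1
          apply Finset.sum_congr rfl
          intro k hk
          have hk3 : 3 ≤ k := (Finset.mem_Icc.mp hk).1
          rw [hprodk k hk, if_neg (by omega : k ≠ 2)]
          ring
      _ = c1 * ((1 + τ 2 * y)⁻¹ * (τ 2 * (y - x2tilde))) := by
          rw [← Finset.mul_sum, ← hH3, key]; ring
  -- the integrand function
  have hintegrand : ∀ y : ℝ,
      max (∑ k ∈ Finset.Icc 2 N,
          (∏ l ∈ Finset.Icc 1 k, (1 + τ l * (if l = 2 then y else x l))⁻¹) *
            (τ k * ((if k = 2 then y else x k) - K))) 0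
      = c1 * max ((1 + τ 2 * y)⁻¹ * (τ 2 * (y - x2tilde))) 0 := by
    intro y
    rw [hsum y, mul_max_of_nonneg _ _ hc1pos.le, mul_zero]
  simp only [hintegrand]
  rw [intervalIntegral.integral_const_mul]
  -- define G and split
  set G : ℝ → ℝ := fun y => max ((1 + τ 2 * y)⁻¹ * (τ 2 * (y - x2tilde))) 0 with hG
  have hGcont : ContinuousOn G (Set.Icc x2m x2p) := by
    apply ContinuousOn.sup _ continuousOn_const
    apply ContinuousOn.mul
    · apply ContinuousOn.inv₀ (by fun_prop)
      intro y hy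
      exact (hposy y hy.1).ne'
    · fun_prop
  have hint1 : IntervalIntegrable G MeasureTheory.volume x2m x2tilde := by
    apply ContinuousOn.intervalIntegrable
    apply hGcont.mono
    rw [Set.uIcc_of_le hm]
    exact Set.Icc_subset_Icc le_rfl (le_trans hp le_rfl)
  have hint2 : IntervalIntegrable G MeasureTheory.volume x2tilde x2p := by
    apply ContinuousOn.intervalIntegrable
    apply hGcont.mono
    rw [Set.uIcc_of_le hp]
    exact Set.Icc_subset_Icc hm le_rfl
  have hsplit : (∫ y in x2m..x2p, G y)
      = (∫ y in x2m..x2tilde, G y) + ∫ y in x2tilde..x2p, G y :=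
    (intervalIntegral.integral_add_adjacent_intervals hint1 hint2).symm
  -- first piece is 0
  have hzero : (∫ y in x2m..x2tilde, G y) = 0 := by
    rw [intervalIntegral.integral_congr (g := fun _ => (0:ℝ))
      (by
        intro y hy
        rw [Set.uIcc_of_le hm] at hy
        have hyp : 0 < 1 + τ 2 * y := hposy y hy.1
        have : (1 + τ 2 * y)⁻¹ * (τ 2 * (y - x2tilde)) ≤ 0 := by
          apply mul_nonpos_of_nonneg_of_nonpos (inv_pos.2 hyp).le
          nlinarith [hy.2]
        simp [hG, max_eq_right this])]
    simp
  -- second piece via FTC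
  have hposT : 0 < 1 + τ 2 * x2tilde := hposy _ hm
  have hposP : 0 < 1 + τ 2 * x2p := hposy _ (le_trans hm hp)
  set C : ℝ := (1 + τ 2 * x2tilde) / τ 2 with hC
  have hmain : (∫ y in x2tilde..x2p, G y)
      = x2p - x2tilde - C * Real.log ((1 + τ 2 * x2p) / (1 + τ 2 * x2tilde)) := by
    have heq : (∫ y in x2tilde..x2p, G y)
        = ∫ y in x2tilde..x2p, (1 + τ 2 * y)⁻¹ * (τ 2 * (y - x2tilde)) := by
      apply intervalIntegral.integral_congr
      intro y hy
      rw [Set.uIcc_of_le hp] at hy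
      have hyp : 0 < 1 + τ 2 * y := hposy y (le_trans hm hy.1)
      have : 0 ≤ (1 + τ 2 * y)⁻¹ * (τ 2 * (y - x2tilde)) := by
        apply mul_nonneg (inv_pos.2 hyp).le
        nlinarith [hy.1]
      simp [hG, max_eq_left this]
    rw [heq]
    have hFTC : (∫ y in x2tilde..x2p, (1 + τ 2 * y)⁻¹ * (τ 2 * (y - x2tilde)))
        = (x2p - C * Real.log (1 + τ 2 * x2p))
          - (x2tilde - C * Real.log (1 + τ 2 * x2tilde)) := by
      apply intervalIntegral.integral_eq_sub_of_hasDerivAt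
        (f := fun y => y - C * Real.log (1 + τ 2 * y))
      · intro y hy
        rw [Set.uIcc_of_le hp] at hy
        have hyp : 0 < 1 + τ 2 * y := hposy y (le_trans hm hy.1)
        have h1 : HasDerivAt (fun y : ℝ => 1 + τ 2 * y) (τ 2) y := by
          simpa using ((hasDerivAt_id y).const_mul (τ 2)).const_add 1
        have h2 : HasDerivAt (fun y : ℝ => Real.log (1 + τ 2 * y))
            (τ 2 / (1 + τ 2 * y)) y := h1.log hyp.ne'
        have h3 : HasDerivAt (fun y : ℝ => y - C * Real.log (1 + τ 2 * y))
            (1 - C * (τ 2 / (1 + τ 2 * y))) y := (hasDerivAt_id y).sub (h2.const_mul C)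
        refine h3.congr_deriv ?_
        rw [hC]
        field_simp
        ring
      · apply ContinuousOn.intervalIntegrable
        apply ContinuousOn.mul
        · exact ContinuousOn.inv₀ (by fun_prop) (fun y hy => by
            rw [Set.uIcc_of_le hp] at hy
            exact (hposy y (le_trans hm hy.1)).ne')
        · fun_prop
    rw [hFTC, Real.log_div hposP.ne' hposT.ne']
    ring
  have hCeq : C = K + (1 - H3) / τ 2 := by
    rw [hC, hx2tilde]; field_simp; ring
  rw [hsplit, hzero, zero_add, hmain, hCeq]
  rw [hc1def, one_div, one_div, mul_inv]
  ring
end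

section
/- Let x ∈ ℝ and h_−, h_+ > 0, and let f be three times continuously differentiable on [x − h_−, x + h_+]. Then the non-uniform central first-derivative approximation is second-order accurate: | β_{−1} f(x − h_−) + β_0 f(x) + β_1 f(x + h_+) − f'(x) | ≤ (h_− h_+ / 6) · sup_{y ∈ [x−h_−, x+h_+]} |f'''(y)|. -/
open Set

lemma taylor2_right_bound {c b M : ℝ} (f f' f'' f''' : ℝ → ℝ)
    (hf : ∀ y ∈ Icc c b, HasDerivWithinAt f (f' y) (Icc c b) y)
    (hf' : ∀ y ∈ Icc c b, HasDerivWithinAt f' (f'' y) (Icc c b) y)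
    (hf'' : ∀ y ∈ Icc c b, HasDerivWithinAt f'' (f''' y) (Icc c b) y)
    (hM : ∀ y ∈ Icc c b, |f''' y| ≤ M) :
    ∀ t ∈ Icc c b,
      |f t - f c - f' c * (t - c) - f'' c * (t - c) ^ 2 / 2| ≤ M / 6 * (t - c) ^ 3 := by
  -- derivatives within `Ici x` at interior points
  have hmem : ∀ x ∈ Ico c b, Icc c b ∈ nhdsWithin x (Ici x) := fun x hx =>
    Icc_mem_nhdsGE_of_mem ⟨hx.1, hx.2⟩
  have hfI : ∀ x ∈ Ico c b, HasDerivWithinAt f (f' x) (Ici x) x := fun x hx =>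
    (hf x (Ico_subset_Icc_self hx)).mono_of_mem_nhdsWithin (hmem x hx)
  have hf'I : ∀ x ∈ Ico c b, HasDerivWithinAt f' (f'' x) (Ici x) x := fun x hx =>
    (hf' x (Ico_subset_Icc_self hx)).mono_of_mem_nhdsWithin (hmem x hx)
  have hf''I : ∀ x ∈ Ico c b, HasDerivWithinAt f'' (f''' x) (Ici x) x := fun x hx =>
    (hf'' x (Ico_subset_Icc_self hx)).mono_of_mem_nhdsWithin (hmem x hx)
  have hfc : ContinuousOn f (Icc c b) := fun y hy =>
    (hf y hy).continuousWithinAt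
  have hf'c : ContinuousOn f' (Icc c b) := fun y hy =>
    (hf' y hy).continuousWithinAt
  have hf''c : ContinuousOn f'' (Icc c b) := fun y hy =>
    (hf'' y hy).continuousWithinAt
  -- step 1 : |f'' t - f'' c| ≤ M * (t - c)
  have step1 : ∀ t ∈ Icc c b, |f'' t - f'' c| ≤ M * (t - c) := by
    have := norm_image_sub_le_of_norm_deriv_right_le_segment hf''c hf''I
      (fun y hy => hM y (Ico_subset_Icc_self hy))
    simpa [Real.norm_eq_abs] using this
  -- step 2 : |f' t - f' c - f'' c * (t - c)| ≤ M/2 * (t - c)^2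
  have step2 : ∀ t ∈ Icc c b, |f' t - f' c - f'' c * (t - c)| ≤ M / 2 * (t - c) ^ 2 := by
    have hg : ContinuousOn (fun t => f' t - f' c - f'' c * (t - c)) (Icc c b) := by
      exact (hf'c.sub continuousOn_const).sub (by fun_prop)
    have hg' : ∀ x ∈ Ico c b,
        HasDerivWithinAt (fun t => f' t - f' c - f'' c * (t - c)) (f'' x - f'' c) (Ici x) x := by
      intro x hx
      have h1 : HasDerivWithinAt (fun t => f'' c * (t - c)) (f'' c) (Ici x) x := by
        simpa using (((hasDerivAt_id x).sub_const c).const_mul (f'' c)).hasDerivWithinAt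
      exact ((hf'I x hx).sub_const (f' c)).sub h1
    have hB : ∀ t, HasDerivAt (fun t => M / 2 * (t - c) ^ 2) (M * (t - c)) t := by
      intro t
      have h := (((hasDerivAt_id t).sub_const c).pow 2).const_mul (M / 2)
      simp only [id_eq] at h
      exact h.congr_deriv (by ring)
    have key := image_norm_le_of_norm_deriv_right_le_deriv_boundary hg hg'
      (B := fun t => M / 2 * (t - c) ^ 2) (by simp)
      hB (fun y hy => by simpa [Real.norm_eq_abs] using step1 y (Ico_subset_Icc_self hy))
    intro t ht
    simpa [Real.norm_eq_abs] using key ht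
  -- step 3
  have hg : ContinuousOn
      (fun t => f t - f c - f' c * (t - c) - f'' c * (t - c) ^ 2 / 2) (Icc c b) := by
    exact ((hfc.sub continuousOn_const).sub (by fun_prop)).sub (by fun_prop)
  have hg' : ∀ x ∈ Ico c b,
      HasDerivWithinAt (fun t => f t - f c - f' c * (t - c) - f'' c * (t - c) ^ 2 / 2)
        (f' x - f' c - f'' c * (x - c)) (Ici x) x := by
    intro x hx
    have h1 : HasDerivWithinAt (fun t => f' c * (t - c)) (f' c) (Ici x) x := by
      simpa using (((hasDerivAt_id x).sub_const c).const_mul (f' c)).hasDerivWithinAt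
    have h2 : HasDerivWithinAt (fun t => f'' c * (t - c) ^ 2 / 2) (f'' c * (x - c)) (Ici x) x := by
      have h := ((((hasDerivAt_id x).sub_const c).pow 2).const_mul (f'' c)).div_const 2
      have h' : HasDerivWithinAt (fun t => f'' c * (t - c) ^ 2 / 2)
          (f'' c * (2 * (x - c) ^ 1 * 1) / 2) (Ici x) x := h.hasDerivWithinAt
      convert h' using 1
      ring
    exact (((hfI x hx).sub_const (f c)).sub h1).sub h2
  have hB : ∀ t, HasDerivAt (fun t => M / 6 * (t - c) ^ 3) (M / 2 * (t - c) ^ 2) t := by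
    intro t
    have h := (((hasDerivAt_id t).sub_const c).pow 3).const_mul (M / 6)
    simp only [id_eq] at h
    exact h.congr_deriv (by ring)
  have key := image_norm_le_of_norm_deriv_right_le_deriv_boundary hg hg'
    (B := fun t => M / 6 * (t - c) ^ 3) (by simp)
    hB (fun y hy => by simpa [Real.norm_eq_abs] using step2 y (Ico_subset_Icc_self hy))
  intro t ht
  simpa [Real.norm_eq_abs] using key ht

/-- for `f` three times continuously differentiable on
`[x - h₋, x + h₊]`, the non-uniform central first-derivative approximation is
second-order accurate, with error bounded by `(h₋ h₊ / 6) sup |f'''|`. -/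
theorem nonuniform_first_derivative_error_bound
    (x hm hp : ℝ) (hhm : 0 < hm) (hhp : 0 < hp)
    (f f' f'' f''' : ℝ → ℝ)
    (hf : ∀ y ∈ Set.Icc (x - hm) (x + hp),
      HasDerivWithinAt f (f' y) (Set.Icc (x - hm) (x + hp)) y)
    (hf' : ∀ y ∈ Set.Icc (x - hm) (x + hp),
      HasDerivWithinAt f' (f'' y) (Set.Icc (x - hm) (x + hp)) y)
    (hf'' : ∀ y ∈ Set.Icc (x - hm) (x + hp),
      HasDerivWithinAt f'' (f''' y) (Set.Icc (x - hm) (x + hp)) y)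
    (hcont : ContinuousOn f''' (Set.Icc (x - hm) (x + hp))) :
    |(-hp / (hm * (hm + hp))) * f (x - hm) + ((hp - hm) / (hm * hp)) * f x +
        (hm / (hp * (hm + hp))) * f (x + hp) - f' x| ≤
      hm * hp / 6 * sSup ((fun y => |f''' y|) '' Set.Icc (x - hm) (x + hp)) := by
  set s := Set.Icc (x - hm) (x + hp) with hs
  set M := sSup ((fun y => |f''' y|) '' s) with hMdef
  have hxs : x ∈ s := ⟨by linarith, by linarith⟩
  have hbdd : BddAbove ((fun y => |f''' y|) '' s) :=
    (isCompact_Icc.image_of_continuousOn hcont.abs).bddAbove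
  have hM : ∀ y ∈ s, |f''' y| ≤ M := fun y hy =>
    le_csSup hbdd ⟨y, hy, rfl⟩
  have hM0 : 0 ≤ M := le_trans (abs_nonneg _) (hM x hxs)
  -- right side
  have hsubR : Set.Icc x (x + hp) ⊆ s := Set.Icc_subset_Icc (by linarith) le_rfl
  have RP := taylor2_right_bound (c := x) (b := x + hp) f f' f'' f'''
    (fun y hy => (hf y (hsubR hy)).mono hsubR)
    (fun y hy => (hf' y (hsubR hy)).mono hsubR)
    (fun y hy => (hf'' y (hsubR hy)).mono hsubR)
    (fun y hy => hM y (hsubR hy))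
    (x + hp) ⟨by linarith, le_rfl⟩
  rw [show x + hp - x = hp from by ring] at RP
  -- left side via reflection g t = f (2x - t)
  have hmaps : ∀ t ∈ Set.Icc x (x + hm), 2 * x - t ∈ s := by
    intro t ht
    obtain ⟨h1, h2⟩ := ht
    exact ⟨by linarith, by linarith⟩
  have hgd : ∀ (F F' : ℝ → ℝ), (∀ y ∈ s, HasDerivWithinAt F (F' y) s y) →
      ∀ t ∈ Set.Icc x (x + hm),
        HasDerivWithinAt (fun u => F (2 * x - u)) (-(F' (2 * x - t)))
          (Set.Icc x (x + hm)) t := by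
    intro F F' hF t ht
    have inner : HasDerivWithinAt (fun u : ℝ => 2 * x - u) (-1) (Set.Icc x (x + hm)) t := by
      simpa using ((hasDerivAt_id t).const_sub (2 * x)).hasDerivWithinAt
    have := (hF (2 * x - t) (hmaps t ht)).comp t inner (fun u hu => hmaps u hu)
    simpa [Function.comp_def, mul_comm] using this
  have g1 := hgd f f' hf
  have g2 : ∀ t ∈ Set.Icc x (x + hm),
      HasDerivWithinAt (fun u => -(f' (2 * x - u))) (f'' (2 * x - t))
        (Set.Icc x (x + hm)) t := by
    intro t ht
    have := (hgd f' f'' hf' t ht).neg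
    simp only [neg_neg] at this
    exact this
  have g3 : ∀ t ∈ Set.Icc x (x + hm),
      HasDerivWithinAt (fun u => f'' (2 * x - u)) (-(f''' (2 * x - t)))
        (Set.Icc x (x + hm)) t := hgd f'' f''' hf''
  have RM := taylor2_right_bound (c := x) (b := x + hm)
    (fun u => f (2 * x - u)) (fun u => -(f' (2 * x - u)))
    (fun u => f'' (2 * x - u)) (fun u => -(f''' (2 * x - u)))
    g1 g2 g3
    (fun y hy => by simpa using hM (2 * x - y) (hmaps y hy))
    (x + hm) ⟨by linarith, le_rfl⟩
  rw [show 2 * x - (x + hm) = x - hm from by ring, show 2 * x - x = x from by ring,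
    show x + hm - x = hm from by ring] at RM
  have RM' : |f (x - hm) - f x + f' x * hm - f'' x * hm ^ 2 / 2| ≤ M / 6 * hm ^ 3 := by
    have h : f (x - hm) - f x + f' x * hm - f'' x * hm ^ 2 / 2
        = f (x - hm) - f x - -f' x * hm - f'' x * hm ^ 2 / 2 := by ring
    rw [h]; exact RM
  -- combine
  have hmp : (0 : ℝ) < hm + hp := by linarith
  have key : (-hp / (hm * (hm + hp))) * f (x - hm) + ((hp - hm) / (hm * hp)) * f x +
        (hm / (hp * (hm + hp))) * f (x + hp) - f' x
      = (-hp / (hm * (hm + hp))) * (f (x - hm) - f x + f' x * hm - f'' x * hm ^ 2 / 2)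
      + (hm / (hp * (hm + hp))) * (f (x + hp) - f x - f' x * hp - f'' x * hp ^ 2 / 2) := by
    field_simp
    ring
  rw [key]
  have h1 : |(-hp / (hm * (hm + hp)))| = hp / (hm * (hm + hp)) := by
    rw [abs_of_nonpos (div_nonpos_of_nonpos_of_nonneg (by linarith) (by positivity))]
    ring
  have h2 : |hm / (hp * (hm + hp))| = hm / (hp * (hm + hp)) :=
    abs_of_nonneg (by positivity)
  calc |(-hp / (hm * (hm + hp))) * (f (x - hm) - f x + f' x * hm - f'' x * hm ^ 2 / 2)
      + (hm / (hp * (hm + hp))) * (f (x + hp) - f x - f' x * hp - f'' x * hp ^ 2 / 2)|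
      ≤ |(-hp / (hm * (hm + hp)))| * |f (x - hm) - f x + f' x * hm - f'' x * hm ^ 2 / 2|
      + |hm / (hp * (hm + hp))| * |f (x + hp) - f x - f' x * hp - f'' x * hp ^ 2 / 2| := by
        refine (abs_add_le _ _).trans ?_
        rw [abs_mul, abs_mul]
    _ ≤ hp / (hm * (hm + hp)) * (M / 6 * hm ^ 3)
      + hm / (hp * (hm + hp)) * (M / 6 * hp ^ 3) := by
        rw [h1, h2]
        exact add_le_add (mul_le_mul_of_nonneg_left RM' (by positivity))
          (mul_le_mul_of_nonneg_left RP (by positivity))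
    _ = hm * hp / 6 * M := by
        field_simp
end
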